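/- Let k₁ and k₂ be relatively prime positive integers. The set H = { (U(a, b, c + k₂t), diag(e^{-2πik₁t}, e^{2πik₁t})) : a, b, c ∈ ℤ, t ∈ ℝ } is a closed subgroup of the product topological group H³(ℝ) × SU(2). -/

import Mathlib

/-- The Heisenberg group over a commutative ring `R`: elements `U(x,y,z)` (upper unitriangular
3×3 matrices `[[1,x,z],[0,1,y],[0,0,1]]`) with the matrix multiplication law
`U(x,y,z)·U(x',y',z') = U(x+x', y+y', z+z'+x·y')`. -/
@[ext]
structure Heis (R : Type*) [CommRing R] where
  x : R
  y : R
  z : R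

namespace Heis

variable {R : Type*} [CommRing R]

instance : Mul (Heis R) := ⟨fun a b => ⟨a.x + b.x, a.y + b.y, a.z + b.z + a.x * b.y⟩⟩
instance : One (Heis R) := ⟨⟨0, 0, 0⟩⟩
instance : Inv (Heis R) := ⟨fun a => ⟨-a.x, -a.y, -a.z + a.x * a.y⟩⟩

@[simp] theorem mul_x (a b : Heis R) : (a * b).x = a.x + b.x := rfl
@[simp] theorem mul_y (a b : Heis R) : (a * b).y = a.y + b.y := rfl
@[simp] theorem mul_z (a b : Heis R) : (a * b).z = a.z + b.z + a.x * b.y := rfl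
@[simp] theorem one_x : (1 : Heis R).x = 0 := rfl
@[simp] theorem one_y : (1 : Heis R).y = 0 := rfl
@[simp] theorem one_z : (1 : Heis R).z = 0 := rfl
@[simp] theorem inv_x (a : Heis R) : (a⁻¹).x = -a.x := rfl
@[simp] theorem inv_y (a : Heis R) : (a⁻¹).y = -a.y := rfl
@[simp] theorem inv_z (a : Heis R) : (a⁻¹).z = -a.z + a.x * a.y := rfl

instance : Group (Heis R) where
  mul := (· * ·)
  one := 1
  inv := (·⁻¹)
  mul_assoc a b c := by ext <;> simp <;> ring
  one_mul a := by ext <;> simp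
  mul_one a := by ext <;> simp
  inv_mul_cancel a := by ext <;> simp <;> ring

@[simp] theorem mk_mul (a b c a' b' c' : R) :
    (⟨a, b, c⟩ * ⟨a', b', c'⟩ : Heis R) = ⟨a + a', b + b', c + c' + a * b'⟩ := rfl

theorem one_def : (1 : Heis R) = ⟨0, 0, 0⟩ := rfl

@[simp] theorem mk_inv (a b c : R) : (⟨a, b, c⟩ : Heis R)⁻¹ = ⟨-a, -b, -c + a * b⟩ := rfl

end Heis

/-- The standard topology on `H³(ℝ)`, i.e. the topology induced from the space of
3×3 real matrices (equivalently, from the matrix entries `(x, y, z)`). -/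
instance : TopologicalSpace (Heis ℝ) :=
  TopologicalSpace.induced (fun h => (h.x, h.y, h.z)) inferInstance

/-- `SU(2)`: the group of 2×2 complex special unitary matrices (unitary matrices of
determinant 1), as a subgroup of the unitary group. -/
def SU2 : Subgroup (Matrix.unitaryGroup (Fin 2) ℂ) where
  carrier := {A | (A : Matrix (Fin 2) (Fin 2) ℂ).det = 1}
  one_mem' := by simp
  mul_mem' {a b} ha hb := by
    simp only [Set.mem_setOf_eq, Matrix.UnitaryGroup.mul_val, Matrix.det_mul] at *
    rw [ha, hb, mul_one]
  inv_mem' {a} ha := by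
    simp only [Set.mem_setOf_eq, Matrix.UnitaryGroup.inv_val] at *
    show (star (a : Matrix (Fin 2) (Fin 2) ℂ)).det = 1
    rw [Matrix.star_eq_conjTranspose, Matrix.det_conjTranspose, ha, star_one]

/-- The element `diag(e^{-iθ}, e^{iθ})` of `SU(2)`. -/
noncomputable def su2diag (θ : ℝ) : SU2 := by
  refine ⟨⟨Matrix.diagonal
      ![Complex.exp (-(θ : ℂ) * Complex.I), Complex.exp ((θ : ℂ) * Complex.I)], ?_⟩, ?_⟩
  · rw [Matrix.mem_unitaryGroup_iff, Matrix.star_eq_conjTranspose,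
      Matrix.diagonal_conjTranspose, Matrix.diagonal_mul_diagonal]
    have hv : (fun i => ![Complex.exp (-(θ : ℂ) * Complex.I), Complex.exp ((θ : ℂ) * Complex.I)] i *
        star ![Complex.exp (-(θ : ℂ) * Complex.I), Complex.exp ((θ : ℂ) * Complex.I)] i) =
        (1 : Fin 2 → ℂ) := by
      funext i
      fin_cases i <;>
        simp [Complex.star_def, ← Complex.exp_conj, ← Complex.exp_add]
    rw [hv]
    exact Matrix.diagonal_one
  · show (Matrix.diagonal _).det = 1
    rw [Matrix.det_diagonal, Fin.prod_univ_two]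
    simp only [Matrix.cons_val_zero, Matrix.cons_val_one, Matrix.head_cons, ← Complex.exp_add]
    ring_nf
    exact Complex.exp_zero

/-- The subset `H = { (U(a,b,c+k₂t), diag(e^{-2πik₁t}, e^{2πik₁t})) : a,b,c ∈ ℤ, t ∈ ℝ }`
of `H³(ℝ) × SU(2)`. -/
noncomputable def Hset (k₁ k₂ : ℕ) : Set (Heis ℝ × SU2) :=
  {p | ∃ (a b c : ℤ) (t : ℝ),
    p = (⟨(a : ℝ), (b : ℝ), (c : ℝ) + (k₂ : ℝ) * t⟩, su2diag (2 * Real.pi * (k₁ : ℝ) * t))}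

theorem su2diag_add (θ ψ : ℝ) : su2diag (θ + ψ) = su2diag θ * su2diag ψ := by
  apply Subtype.ext
  apply Subtype.ext
  show (Matrix.diagonal _ : Matrix (Fin 2) (Fin 2) ℂ) = Matrix.diagonal _ * Matrix.diagonal _
  rw [Matrix.diagonal_mul_diagonal]
  ext i j
  fin_cases i <;> fin_cases j <;>
    simp [Matrix.diagonal_apply, ← Complex.exp_add] <;> ring_nf

theorem su2diag_zero : su2diag 0 = 1 := by
  apply Subtype.ext
  apply Subtype.ext
  show (Matrix.diagonal _ : Matrix (Fin 2) (Fin 2) ℂ) = 1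
  ext i j
  fin_cases i <;> fin_cases j <;> simp [Matrix.diagonal_apply, Matrix.one_apply]

theorem su2diag_neg (θ : ℝ) : su2diag (-θ) = (su2diag θ)⁻¹ :=
  eq_inv_of_mul_eq_one_left (by rw [← su2diag_add, neg_add_cancel, su2diag_zero])

theorem su2diag_periodic (θ : ℝ) (n : ℤ) : su2diag (θ + 2 * Real.pi * n) = su2diag θ := by
  have h1 : Complex.exp ((n : ℂ) * (2 * Real.pi * Complex.I)) = 1 :=
    Complex.exp_int_mul_two_pi_mul_I n
  have h2 : Complex.exp (-((n : ℂ) * (2 * Real.pi * Complex.I))) = 1 := by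
    rw [Complex.exp_neg, h1, inv_one]
  apply Subtype.ext
  apply Subtype.ext
  show (Matrix.diagonal _ : Matrix (Fin 2) (Fin 2) ℂ) = Matrix.diagonal _
  ext i j
  fin_cases i <;> fin_cases j <;> simp only [Matrix.diagonal_apply, Fin.isValue,
    Matrix.cons_val_zero, Matrix.cons_val_one, Matrix.head_cons, if_pos, if_neg,
    Complex.ofReal_add, Complex.ofReal_mul, Complex.ofReal_intCast, Complex.ofReal_ofNat,
    Fin.zero_eta, Fin.mk_one]
  · rw [show -((θ : ℂ) + 2 * Real.pi * n) * Complex.I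
        = -(θ : ℂ) * Complex.I + -((n:ℂ) * (2 * Real.pi * Complex.I)) by ring,
      Complex.exp_add, h2, mul_one]
  · simp
  · simp
  · rw [show ((θ : ℂ) + 2 * Real.pi * n) * Complex.I
        = (θ : ℂ) * Complex.I + (n:ℂ) * (2 * Real.pi * Complex.I) by ring,
      Complex.exp_add, h1, mul_one]

theorem su2diag_continuous : Continuous su2diag := by
  apply Continuous.subtype_mk
  apply Continuous.subtype_mk
  apply continuous_matrix
  intro i j
  by_cases h : i = j
  · subst h
    simp only [Matrix.diagonal_apply, if_pos rfl]
    fin_cases i <;> simp <;> fun_prop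
  · simp only [Matrix.diagonal_apply, if_neg h]
    exact continuous_const
theorem Hset_isClosed_subgroup (k₁ k₂ : ℕ) (hk₁ : 0 < k₁) (hk₂ : 0 < k₂)
    (hcop : Nat.Coprime k₁ k₂) :
    ∃ H : Subgroup (Heis ℝ × SU2),
      (H : Set (Heis ℝ × SU2)) = Hset k₁ k₂ ∧ IsClosed (H : Set (Heis ℝ × SU2)) := by
  have hk₂R : (k₂ : ℝ) ≠ 0 := Nat.cast_ne_zero.mpr hk₂.ne'
  -- the subgroup structure
  refine ⟨{ carrier := Hset k₁ k₂, one_mem' := ?_, mul_mem' := ?_, inv_mem' := ?_ }, rfl, ?_⟩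
  -- mul_mem' (goal order follows structure field order: mul, one, inv)
  · rintro p q ⟨a, b, c, t, rfl⟩ ⟨a', b', c', t', rfl⟩
    refine ⟨a + a', b + b', c + c' + a * b', t + t', ?_⟩
    refine Prod.ext ?_ ?_
    · show (⟨(a:ℝ), b, _⟩ * ⟨(a':ℝ), b', _⟩ : Heis ℝ) = _
      ext <;> simp <;> push_cast <;> ring
    · show su2diag _ * su2diag _ = su2diag _
      rw [← su2diag_add]
      congr 1
      ring
  -- one_mem'
  · exact ⟨0, 0, 0, 0, by
      simp only [Int.cast_zero, mul_zero, add_zero, su2diag_zero]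
      rfl⟩
  -- inv_mem'
  · rintro p ⟨a, b, c, t, rfl⟩
    refine ⟨-a, -b, -c + a * b, -t, ?_⟩
    refine Prod.ext ?_ ?_
    · show (⟨(a:ℝ), b, _⟩ : Heis ℝ)⁻¹ = _
      ext <;> simp <;> push_cast <;> ring
    · show (su2diag _)⁻¹ = su2diag _
      rw [← su2diag_neg]
      congr 1
      ring
  -- closedness
  · show IsClosed (Hset k₁ k₂)
    have hE : Continuous fun h : Heis ℝ => (h.x, h.y, h.z) := by
      exact continuous_induced_dom
    have hz : Continuous fun h : Heis ℝ => h.z := (continuous_snd.comp continuous_snd).comp hE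
    have hx : Continuous fun h : Heis ℝ => h.x := continuous_fst.comp hE
    have hy : Continuous fun h : Heis ℝ => h.y := (continuous_fst.comp continuous_snd).comp hE
    have key : Hset k₁ k₂ =
        ((fun p : Heis ℝ × SU2 => p.1.x) ⁻¹' Set.range ((↑) : ℤ → ℝ)) ∩
        ((fun p : Heis ℝ × SU2 => p.1.y) ⁻¹' Set.range ((↑) : ℤ → ℝ)) ∩
        ⋃ m ∈ Finset.range k₂,
          {p : Heis ℝ × SU2 |
            p.2 = su2diag (2 * Real.pi * ((k₁ : ℝ) * p.1.z + m) / k₂)} := by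
      ext p
      constructor
      · rintro ⟨a, b, c, t, rfl⟩
        refine ⟨⟨⟨a, rfl⟩, ⟨b, rfl⟩⟩, ?_⟩
        set m : ℤ := (-(k₁ : ℤ) * c) % k₂ with hm
        have hm0 : 0 ≤ m := Int.emod_nonneg _ (by exact_mod_cast hk₂.ne')
        have hmlt : m < k₂ := Int.emod_lt_of_pos _ (by exact_mod_cast hk₂)
        obtain ⟨n, hn⟩ : ∃ n : ℤ, (k₁ : ℤ) * c + m = k₂ * n :=
          ⟨-((-(k₁ : ℤ) * c) / k₂), by
            have hed := Int.emod_add_mul_ediv (-(k₁ : ℤ) * c) (k₂ : ℤ)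
            rw [hm]
            linarith [hed]⟩
        simp only [Set.mem_iUnion, Finset.mem_range, Set.mem_setOf_eq]
        refine ⟨m.toNat, by omega, ?_⟩
        show su2diag _ = su2diag _
        have hcast : ((m.toNat : ℕ) : ℝ) = (m : ℝ) := by
          exact_mod_cast Int.toNat_of_nonneg hm0
        have hnR : (k₁ : ℝ) * c + (m : ℝ) = (k₂ : ℝ) * n := by
          exact_mod_cast congrArg (Int.cast : ℤ → ℝ) hn
        have harg : 2 * Real.pi * ((k₁ : ℝ) * ((c : ℝ) + (k₂ : ℝ) * t) + (m.toNat : ℝ)) / k₂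
            = 2 * Real.pi * (k₁ : ℝ) * t + 2 * Real.pi * (n : ℤ) := by
          rw [hcast]
          field_simp
          linear_combination hnR
        rw [harg, su2diag_periodic]
      · rintro ⟨⟨⟨a, ha⟩, ⟨b, hb⟩⟩, hU⟩
        simp only [Set.mem_iUnion, Finset.mem_range, Set.mem_setOf_eq] at hU
        obtain ⟨m, hmlt, hs⟩ := hU
        obtain ⟨u, v, huv⟩ := Nat.isCoprime_iff_coprime.mpr hcop
        have hkey : (k₁ : ℤ) * (-(m : ℤ) * u) + m = k₂ * ((m : ℤ) * v) := by
          linear_combination (-(m : ℤ)) * huv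
        set c : ℤ := -(m : ℤ) * u with hc
        set t : ℝ := (p.1.z - c) / k₂ with ht
        refine ⟨a, b, c, t, ?_⟩
        have hzz : (c : ℝ) + (k₂ : ℝ) * t = p.1.z := by
          rw [ht]; field_simp; ring
        refine Prod.ext ?_ ?_
        · show p.1 = (⟨(a:ℝ), (b:ℝ), _⟩ : Heis ℝ)
          ext
          · exact ha.symm
          · exact hb.symm
          · exact hzz.symm
        · show p.2 = su2diag _
          rw [hs]
          have hkeyR : (k₁ : ℝ) * c + (m : ℝ) = (k₂ : ℝ) * ((m : ℝ) * v) := by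
            exact_mod_cast congrArg (Int.cast : ℤ → ℝ) hkey
          have harg : 2 * Real.pi * ((k₁ : ℝ) * p.1.z + m) / k₂
              = 2 * Real.pi * (k₁ : ℝ) * t + 2 * Real.pi * (((m : ℤ) * v : ℤ) : ℝ) := by
            rw [ht]
            push_cast
            field_simp
            linear_combination hkeyR
          rw [harg, su2diag_periodic]
    rw [key]
    have hR : IsClosed (Set.range ((↑) : ℤ → ℝ)) := Int.isClosedEmbedding_coe_real.isClosed_range
    refine IsClosed.inter (IsClosed.inter ?_ ?_) ?_
    · exact hR.preimage (hx.comp continuous_fst)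
    · exact hR.preimage (hy.comp continuous_fst)
    · refine Set.Finite.isClosed_biUnion (Finset.range k₂).finite_toSet fun m _ => ?_
      refine isClosed_eq continuous_snd (su2diag_continuous.comp ?_)
      exact (continuous_const.mul ((continuous_const.mul
        (hz.comp continuous_fst)).add continuous_const)).div_const _
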